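/- Let (G,κ) be a proper edge coloring of a tree with at least 3 vertices. If (G,κ) presents a generalized toggle group, then the coloring group 𝔊_κ is primitive. -/

import Mathlib

open scoped Classical

/-- A proper edge coloring of a finite simple graph `G` with colors `{1, …, k}`:
it assigns colors in `{1, …, k}` to edges, is surjective onto `{1, …, k}`, and
incident edges receive distinct colors. -/
def IsProperEdgeColoring {V : Type*} (G : SimpleGraph V) (k : ℕ) (κ : Sym2 V → ℕ) : Prop :=
  (∀ e ∈ G.edgeSet, κ e ∈ Finset.Icc 1 k) ∧
  (∀ a ∈ Finset.Icc 1 k, ∃ e ∈ G.edgeSet, κ e = a) ∧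
  (∀ u v w : V, G.Adj u v → G.Adj u w → v ≠ w → κ s(u, v) ≠ κ s(u, w))
/-- `IsToggle G κ a τ` says that the permutation `τ` is the product of the
transpositions `(i j)` over all edges `{i,j}` of `G` colored `a`: it swaps the two
endpoints of every edge colored `a` and fixes all other vertices. -/
def IsToggle {V : Type*} (G : SimpleGraph V) (κ : Sym2 V → ℕ) (a : ℕ) (τ : Equiv.Perm V) : Prop :=
  ∀ v w : V, v ≠ w → (τ v = w ↔ G.Adj v w ∧ κ s(v, w) = a)
/-- The coloring group `𝔊_κ`: the subgroup of `Sym(V)` generated by the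
permutations `τ_1, …, τ_k` associated to the colors `1, …, k`. -/
def coloringGroup {V : Type*} (G : SimpleGraph V) (k : ℕ) (κ : Sym2 V → ℕ) :
    Subgroup (Equiv.Perm V) :=
  Subgroup.closure { τ : Equiv.Perm V | ∃ a : ℕ, 1 ≤ a ∧ a ≤ k ∧ IsToggle G κ a τ }
/-- A subgroup `H ≤ Sym(X)` is imprimitive if there is an `H`-invariant partition of `X`
(encoded as an `H`-invariant equivalence relation) having a block of size strictly
between `1` and `|X|`. -/
def Imprimitive {X : Type*} [Fintype X] (H : Subgroup (Equiv.Perm X)) : Prop :=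
  ∃ r : X → X → Prop, Equivalence r ∧
    (∀ g ∈ H, ∀ x y : X, r x y → r (g x) (g y)) ∧
    ∃ x : X, 1 < {y | r x y}.ncard ∧ {y | r x y}.ncard < Fintype.card X
/-- The toggle `τ_e` acting on subsets: `τ_e X = X ∆ {e}` (that is, `X ∪ {e}` if `e ∉ X`,
and `X \ {e}` if `e ∈ X`) whenever the result lies in `L`, and `τ_e X = X` otherwise. -/
noncomputable def toggle {E : Type*} [DecidableEq E] (L : Set (Finset E)) (e : E)
    (X : Finset E) : Finset E :=
  if symmDiff X {e} ∈ L then symmDiff X {e} else X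
/-- `(G,κ)` *presents a generalized toggle group* if there are a finite set `E'`, a
family `L` of subsets of `E'`, a bijection `φ` from the vertices of `G` to `L`, and an
injection `c` from the colors `{1, …, k}` to `E'`, such that `{i,j}` is an edge of `G`
colored `a` iff `φ i ≠ φ j` and `φ j = τ_{c a}(φ i)`. -/
def PresentsToggleGroup {V : Type*} (G : SimpleGraph V) (k : ℕ) (κ : Sym2 V → ℕ) : Prop :=
  ∃ (E' : Type) (_ : Fintype E') (_ : DecidableEq E') (L : Set (Finset E'))
    (φ : V → Finset E') (c : ℕ → E'),
    (∀ v : V, φ v ∈ L) ∧ (∀ X ∈ L, ∃ v : V, φ v = X) ∧ Function.Injective φ ∧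
    Set.InjOn c (Set.Icc 1 k) ∧
    (∀ (i j : V) (a : ℕ), 1 ≤ a → a ≤ k →
      ((G.Adj i j ∧ κ s(i, j) = a) ↔ (φ i ≠ φ j ∧ φ j = toggle L (c a) (φ i))))


open SimpleGraph

section AuxTree

variable {V : Type*} {G : SimpleGraph V}

lemma aux_dist_lt_card [Fintype V] (hc : G.Connected) (u v : V) :
    G.dist u v < Fintype.card V := by
  classical
  obtain ⟨p⟩ := hc u v
  calc G.dist u v ≤ p.bypass.length := SimpleGraph.dist_le _
    _ < Fintype.card V := p.bypass_isPath.length_lt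

lemma aux_tree_dist_ne_of_adj (hG : G.IsTree) (x v w : V) (h : G.Adj v w) :
    G.dist x v ≠ G.dist x w := by
  intro he
  have hc := hG.isConnected
  obtain ⟨pv, hpv⟩ := hc.exists_walk_length_eq_dist x v
  obtain ⟨pw, hpw⟩ := hc.exists_walk_length_eq_dist x w
  have hPv : pv.IsPath := pv.isPath_of_length_eq_dist hpv
  have hPw : pw.IsPath := pw.isPath_of_length_eq_dist hpw
  have hvnot : v ∉ pw.support := by
    intro hmem
    have hsp := pw.take_spec hmem
    have hlen : (pw.takeUntil v hmem).length + (pw.dropUntil v hmem).length = pw.length := by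
      rw [← SimpleGraph.Walk.length_append, hsp]
    have hd1 : 1 ≤ (pw.dropUntil v hmem).length := by
      rcases Nat.eq_zero_or_pos (pw.dropUntil v hmem).length with h0 | h0
      · exact absurd (SimpleGraph.Walk.eq_of_length_eq_zero h0) h.ne
      · exact h0
    have hdl : G.dist x v ≤ (pw.takeUntil v hmem).length := SimpleGraph.dist_le _
    omega
  have hA : (pv.reverse : G.Walk v x).IsPath := hPv.reverse
  have hB : ((pw.reverse).cons h : G.Walk v x).IsPath := by
    apply SimpleGraph.Walk.IsPath.cons hPw.reverse
    simpa [SimpleGraph.Walk.support_reverse] using hvnot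
  have heq := (hG.existsUnique_path v x).unique hA hB
  have hlen := congrArg SimpleGraph.Walk.length heq
  simp only [SimpleGraph.Walk.length_reverse, SimpleGraph.Walk.length_cons] at hlen
  omega

lemma aux_tree_parent_unique (hG : G.IsTree) (x v w₁ w₂ : V)
    (h1 : G.Adj v w₁) (h2 : G.Adj v w₂)
    (e1 : G.dist x w₁ + 1 = G.dist x v) (e2 : G.dist x w₂ + 1 = G.dist x v) : w₁ = w₂ := by
  have hc := hG.isConnected
  obtain ⟨p1, hp1⟩ := hc.exists_walk_length_eq_dist x w₁
  obtain ⟨p2, hp2⟩ := hc.exists_walk_length_eq_dist x w₂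
  have hP1 : p1.IsPath := p1.isPath_of_length_eq_dist hp1
  have hP2 : p2.IsPath := p2.isPath_of_length_eq_dist hp2
  have hv1 : v ∉ p1.support := by
    intro hmem
    have hle := SimpleGraph.Walk.length_takeUntil_le p1 hmem
    have hdl : G.dist x v ≤ (p1.takeUntil v hmem).length := SimpleGraph.dist_le _
    omega
  have hv2 : v ∉ p2.support := by
    intro hmem
    have hle := SimpleGraph.Walk.length_takeUntil_le p2 hmem
    have hdl : G.dist x v ≤ (p2.takeUntil v hmem).length := SimpleGraph.dist_le _
    omega
  have hB1 : ((p1.reverse).cons h1 : G.Walk v x).IsPath := by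
    apply SimpleGraph.Walk.IsPath.cons hP1.reverse
    simpa [SimpleGraph.Walk.support_reverse] using hv1
  have hB2 : ((p2.reverse).cons h2 : G.Walk v x).IsPath := by
    apply SimpleGraph.Walk.IsPath.cons hP2.reverse
    simpa [SimpleGraph.Walk.support_reverse] using hv2
  have heq := (hG.existsUnique_path v x).unique hB1 hB2
  have := congrArg (fun q : G.Walk v x => q.getVert 1) heq
  simpa [SimpleGraph.Walk.getVert_cons_succ, SimpleGraph.Walk.getVert_zero] using this

end AuxTree
open SimpleGraph

section AuxToggle

variable {V : Type*} {G : SimpleGraph V} {κ : Sym2 V → ℕ} {a : ℕ}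

lemma exists_isToggle
    (hκ3 : ∀ u v w : V, G.Adj u v → G.Adj u w → v ≠ w → κ s(u, v) ≠ κ s(u, w)) (a : ℕ) :
    ∃ τ : Equiv.Perm V, IsToggle G κ a τ := by
  classical
  set f : V → V := fun v => if h : ∃ w, G.Adj v w ∧ κ s(v, w) = a then h.choose else v with hf
  have hspec : ∀ (v : V) (h : ∃ w, G.Adj v w ∧ κ s(v, w) = a),
      G.Adj v (f v) ∧ κ s(v, f v) = a := by
    intro v h
    simp only [hf, dif_pos h]
    exact h.choose_spec
  have hkey : ∀ v w : V, G.Adj v w → κ s(v, w) = a → f v = w := by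
    intro v w hadj hk
    have hex : ∃ w, G.Adj v w ∧ κ s(v, w) = a := ⟨w, hadj, hk⟩
    obtain ⟨hA, hK⟩ := hspec v hex
    by_contra hne
    exact (hκ3 v (f v) w hA hadj hne) (hK.trans hk.symm)
  have hfix : ∀ v : V, (¬ ∃ w, G.Adj v w ∧ κ s(v, w) = a) → f v = v := by
    intro v h
    simp only [hf, dif_neg h]
  have hinv : Function.Involutive f := by
    intro v
    by_cases h : ∃ w, G.Adj v w ∧ κ s(v, w) = a
    · obtain ⟨hA, hK⟩ := hspec v h
      exact hkey (f v) v hA.symm (by rwa [Sym2.eq_swap])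
    · rw [hfix v h, hfix v h]
  refine ⟨hinv.toPerm f, ?_⟩
  intro v w hvw
  have hco : hinv.toPerm f v = f v := rfl
  constructor
  · intro hτ
    rw [hco] at hτ
    by_cases h : ∃ w, G.Adj v w ∧ κ s(v, w) = a
    · obtain ⟨hA, hK⟩ := hspec v h
      rw [hτ] at hA hK
      exact ⟨hA, hK⟩
    · exact absurd (hτ ▸ (hfix v h).symm) hvw
  · rintro ⟨hadj, hk⟩
    rw [hco]
    exact hkey v w hadj hk

lemma isToggle_cases {τ : Equiv.Perm V} (hτ : IsToggle G κ a τ) (v : V) :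
    (τ v = v ∧ ∀ w, ¬ (G.Adj v w ∧ κ s(v, w) = a)) ∨
    (τ v ≠ v ∧ G.Adj v (τ v) ∧ κ s(v, τ v) = a) := by
  by_cases h : τ v = v
  · left
    refine ⟨h, fun w hw => ?_⟩
    have hne : v ≠ w := fun he => G.loopless.irrefl v (he ▸ hw.1)
    have h2 := (hτ v w hne).2 hw
    exact hne (h.symm.trans h2)
  · right
    exact ⟨h, (hτ v (τ v) (Ne.symm h)).1 rfl⟩

end AuxToggle
section AuxSymm

variable {E : Type*} [DecidableEq E]

lemma aux_symmDiff_ne (X : Finset E) (e : E) : symmDiff X {e} ≠ X := by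
  intro h
  have := Finset.ext_iff.mp h e
  by_cases he : e ∈ X <;> simp [Finset.mem_symmDiff, he] at this

lemma aux_symmDiff_swap (X : Finset E) (e f : E) :
    symmDiff (symmDiff X {e}) {f} = symmDiff (symmDiff X {f}) {e} := by
  rw [symmDiff_assoc, symmDiff_assoc, symmDiff_comm ({e} : Finset E) {f}]

lemma aux_symmDiff_inj (X : Finset E) {e f : E} (h : symmDiff X {e} = symmDiff X {f}) :
    e = f := by
  by_contra hne
  have := Finset.ext_iff.mp h e
  by_cases he : e ∈ X <;> simp [Finset.mem_symmDiff, he, hne] at this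

end AuxSymm

/-- If a proper edge coloring of a tree with at least 3 vertices
presents a generalized toggle group, then the coloring group `𝔊_κ` is primitive. -/
theorem stmt_14 {V : Type*} [Fintype V] (G : SimpleGraph V) (hG : G.IsTree)
    (hn : 3 ≤ Fintype.card V)
    (k : ℕ) (κ : Sym2 V → ℕ) (hκ : IsProperEdgeColoring G k κ)
    (hpres : PresentsToggleGroup G k κ) :
    ¬ Imprimitive (coloringGroup G k κ) := by
  classical
  rintro ⟨r, hre, hinvar, x0, hx1, hx2⟩
  obtain ⟨E', _, _, L, φ, c, hφL, hLsurj, hφinj, hcinj, hiff⟩ := hpres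
  obtain ⟨hκ1, hκ2, hκ3⟩ := hκ
  have hc := hG.isConnected
  -- color bounds
  have hcol : ∀ {u v : V}, G.Adj u v → 1 ≤ κ s(u, v) ∧ κ s(u, v) ≤ k := by
    intro u v h
    have := hκ1 s(u, v) (G.mem_edgeSet.mpr h)
    simpa [Finset.mem_Icc] using this
  -- toggles in the group
  have htog : ∀ {u v : V}, G.Adj u v →
      ∃ τ : Equiv.Perm V, IsToggle G κ (κ s(u, v)) τ ∧ τ ∈ coloringGroup G k κ := by
    intro u v h
    obtain ⟨τ, hτ⟩ := exists_isToggle (G := G) (κ := κ) hκ3 (κ s(u, v))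
    exact ⟨τ, hτ, Subgroup.subset_closure ⟨κ s(u, v), (hcol h).1, (hcol h).2, hτ⟩⟩
  -- the φ-image of an edge
  have hφedge : ∀ {u v : V}, G.Adj u v → φ v = symmDiff (φ u) {c (κ s(u, v))} := by
    intro u v h
    obtain ⟨hne, htg⟩ := (hiff u v (κ s(u, v)) (hcol h).1 (hcol h).2).1 ⟨h, rfl⟩
    by_cases hmem : symmDiff (φ u) {c (κ s(u, v))} ∈ L
    · rw [htg]; unfold toggle; rw [if_pos hmem]
    · exfalso; apply hne; rw [htg]; unfold toggle; rw [if_neg hmem]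
  -- no-forbidden-color lemma (uses the presentation and acyclicity)
  have hNC : ∀ x y z w : V, G.Adj x y → G.Adj y z → x ≠ z → G.Adj x w →
      κ s(x, w) = κ s(y, z) → False := by
    intro x y z w hxy hyz hxz hxw hkb
    have hab : κ s(x, y) ≠ κ s(y, z) := by
      have := hκ3 y x z hxy.symm hyz hxz
      rwa [Sym2.eq_swap] at this
    have hca : φ y = symmDiff (φ x) {c (κ s(x, y))} := hφedge hxy
    have hcw : φ w = symmDiff (φ x) {c (κ s(y, z))} := by rw [hφedge hxw, hkb]
    have hcz : φ z = symmDiff (symmDiff (φ x) {c (κ s(x, y))}) {c (κ s(y, z))} := by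
      rw [hφedge hyz, hca]
    have hcab : c (κ s(x, y)) ≠ c (κ s(y, z)) := by
      intro h
      exact hab (hcinj (Set.mem_Icc.mpr ⟨(hcol hxy).1, (hcol hxy).2⟩)
        (Set.mem_Icc.mpr ⟨(hcol hyz).1, (hcol hyz).2⟩) h)
    have hφwz : φ z = symmDiff (φ w) {c (κ s(x, y))} := by
      rw [hcw, hcz, aux_symmDiff_swap]
    have hwz : G.Adj w z ∧ κ s(w, z) = κ s(x, y) := by
      apply (hiff w z (κ s(x, y)) (hcol hxy).1 (hcol hxy).2).2
      refine ⟨?_, ?_⟩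
      · rw [hφwz]
        exact fun h => aux_symmDiff_ne (φ w) (c (κ s(x, y))) h.symm
      · unfold toggle
        rw [if_pos (by rw [← hφwz]; exact hφL z)]
        exact hφwz
    have hyw : y ≠ w := by
      intro h
      apply hcab
      apply aux_symmDiff_inj (φ x)
      rw [← hca, ← hcw, h]
    -- two distinct paths from x to z contradict unique paths in a tree
    have hp1 : (SimpleGraph.Walk.cons hxy (SimpleGraph.Walk.cons hyz SimpleGraph.Walk.nil)
        : G.Walk x z).IsPath := by
      rw [SimpleGraph.Walk.isPath_def]
      simp [hxy.ne, hxz, hyz.ne]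
    have hp2 : (SimpleGraph.Walk.cons hxw (SimpleGraph.Walk.cons hwz.1 SimpleGraph.Walk.nil)
        : G.Walk x z).IsPath := by
      rw [SimpleGraph.Walk.isPath_def]
      simp [hxw.ne, hxz, hwz.1.ne]
    have heq := (hG.existsUnique_path x z).unique hp1 hp2
    have := congrArg (fun q : G.Walk x z => q.getVert 1) heq
    simp only [SimpleGraph.Walk.getVert_cons_succ, SimpleGraph.Walk.getVert_zero] at this
    exact hyw this
  -- propagation of the relation along adjacent edges
  have hprop : ∀ x y z : V, G.Adj x y → r x y → G.Adj y z → z ≠ x → r y z := by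
    intro x y z hxy hrxy hyz hzx
    obtain ⟨τ, hτ, hmem⟩ := htog hyz
    have hτy : τ y = z := (hτ y z hyz.ne).2 ⟨hyz, rfl⟩
    have hτx : τ x = x := by
      rcases isToggle_cases hτ x with ⟨h, _⟩ | ⟨_, hA, hK⟩
      · exact h
      · exact (hNC x y z (τ x) hxy hyz (Ne.symm hzx) hA hK).elim
    have hxz : r x z := by
      have := hinvar τ hmem x y hrxy
      rwa [hτx, hτy] at this
    exact hre.trans (hre.symm hrxy) hxz
  -- an adjacent equivalent pair exists
  have hseed : ∃ u v : V, G.Adj u v ∧ r u v := by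
    obtain ⟨y0, z0, hy0, hz0, hyz0⟩ := (Set.one_lt_ncard_iff (Set.toFinite _)).mp hx1
    have hEx : ∃ n : ℕ, ∃ u v : V, u ≠ v ∧ r u v ∧ G.dist u v = n :=
      ⟨_, y0, z0, hyz0, hre.trans (hre.symm hy0) hz0, rfl⟩
    obtain ⟨u0, v0, hne0, hr0, hdist0⟩ := Nat.find_spec hEx
    have hmind : ∀ u v : V, u ≠ v → r u v → Nat.find hEx ≤ G.dist u v := by
      intro u v h1 h2
      by_contra hlt
      exact Nat.find_min hEx (lt_of_not_ge hlt) ⟨u, v, h1, h2, rfl⟩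
    have hd1 : 1 ≤ Nat.find hEx := by
      rcases Nat.eq_zero_or_pos (Nat.find hEx) with h0 | h0
      · exact absurd (hc.dist_eq_zero_iff.mp (hdist0.trans h0)) hne0
      · exact h0
    rcases eq_or_lt_of_le hd1 with h1 | h2
    · exact ⟨u0, v0, SimpleGraph.dist_eq_one_iff_adj.mp (hdist0.trans h1.symm), hr0⟩
    exfalso
    set d := Nat.find hEx with hdd
    have claim : ∀ t : ℕ, ∃ u v : V,
        r u v ∧ G.dist u0 u = t ∧ G.dist u0 v = t + d ∧ G.dist u v = d := by
      intro t
      induction t with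
      | zero =>
        exact ⟨u0, v0, hr0, SimpleGraph.dist_self, by simpa using hdist0, hdist0⟩
      | succ t ih =>
        obtain ⟨u, v, hruv, hdu, hdv, hduv⟩ := ih
        have huv : u ≠ v := by
          intro h; rw [h] at hdu; omega
        obtain ⟨p, hp⟩ := hc.exists_walk_length_eq_dist u v
        cases p with
        | nil => rw [SimpleGraph.Walk.length_nil] at hp; omega
        | cons h q =>
          rename_i b
          rw [SimpleGraph.Walk.length_cons] at hp
          have hqlen : q.length + 1 = d := by omega
          obtain ⟨τ, hτ, hmem⟩ := htog h
          have hτu : τ u = b := (hτ u b h.ne).2 ⟨h, rfl⟩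
          have hr1 : r (τ u) (τ v) := hinvar τ hmem u v hruv
          have hne1 : τ u ≠ τ v := fun he => huv (τ.injective he)
          have hdbv : G.dist b v ≤ d - 1 := by
            have := SimpleGraph.dist_le q; omega
          have hτvv : τ v ≠ v := by
            intro he
            have hge := hmind (τ u) (τ v) hne1 hr1
            rw [hτu, he] at hge
            omega
          have hadjv : G.Adj v (τ v) ∧ κ s(v, τ v) = κ s(u, b) := by
            rcases isToggle_cases hτ v with ⟨he, _⟩ | ⟨_, hA, hK⟩
            · exact absurd he hτvv
            · exact ⟨hA, hK⟩
          have hdvτ : G.dist v (τ v) = 1 := SimpleGraph.dist_eq_one_iff_adj.mpr hadjv.1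
          have hdnew : G.dist b (τ v) = d := by
            have hle : G.dist b (τ v) ≤ G.dist b v + G.dist v (τ v) := hc.dist_triangle
            have hge := hmind (τ u) (τ v) hne1 hr1
            rw [hτu] at hge
            omega
          have hub : G.dist u0 b = t + 1 := by
            have hle : G.dist u0 b ≤ G.dist u0 u + G.dist u b := hc.dist_triangle
            have hub1 : G.dist u b = 1 := SimpleGraph.dist_eq_one_iff_adj.mpr h
            have hge : G.dist u0 v ≤ G.dist u0 b + G.dist b v := hc.dist_triangle
            omega
          have hv1a : t + d ≤ G.dist u0 (τ v) + 1 := by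
            have h1 : G.dist u0 v ≤ G.dist u0 (τ v) + G.dist (τ v) v := hc.dist_triangle
            have h2 : G.dist (τ v) v = 1 := by rw [SimpleGraph.dist_comm]; exact hdvτ
            omega
          have hv1b : G.dist u0 (τ v) ≤ t + d + 1 := by
            have h1 : G.dist u0 (τ v) ≤ G.dist u0 v + G.dist v (τ v) := hc.dist_triangle
            omega
          have hne_td : G.dist u0 (τ v) ≠ t + d := by
            rw [← hdv]
            exact Ne.symm (aux_tree_dist_ne_of_adj hG u0 v (τ v) hadjv.1)
          have hcase : G.dist u0 (τ v) = t + d + 1 ∨ G.dist u0 (τ v) = t + d - 1 := by omega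
          rcases hcase with hgood | hbad
          · refine ⟨b, τ v, ?_, hub, ?_, hdnew⟩
            · rw [← hτu]; exact hr1
            · rw [hgood]; omega
          · exfalso
            obtain ⟨q', hq'⟩ := hc.exists_walk_length_eq_dist b v
            have hdbv2 : G.dist b v = d - 1 := by
              have hge : G.dist u0 v ≤ G.dist u0 b + G.dist b v := hc.dist_triangle
              omega
            cases hrev : q'.reverse with
            | nil =>
              have hl0 := congrArg SimpleGraph.Walk.length hrev
              rw [SimpleGraph.Walk.length_reverse, SimpleGraph.Walk.length_nil] at hl0
              omega
            | cons h'' q'' =>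
              rename_i w2
              have hlen2 := congrArg SimpleGraph.Walk.length hrev
              rw [SimpleGraph.Walk.length_reverse, SimpleGraph.Walk.length_cons] at hlen2
              have hw2b : G.dist w2 b ≤ d - 2 := by
                have := SimpleGraph.dist_le q''
                omega
              have hw2u0 : G.dist u0 w2 = t + d - 1 := by
                have hle : G.dist u0 w2 ≤ G.dist u0 b + G.dist b w2 := hc.dist_triangle
                have hcm : G.dist b w2 = G.dist w2 b := SimpleGraph.dist_comm
                have hge : G.dist u0 v ≤ G.dist u0 w2 + G.dist w2 v := hc.dist_triangle
                have hw2v : G.dist w2 v = 1 := by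
                  rw [SimpleGraph.dist_comm]
                  exact SimpleGraph.dist_eq_one_iff_adj.mpr h''
                omega
              have heqw : τ v = w2 :=
                aux_tree_parent_unique hG u0 v (τ v) w2 hadjv.1 h'' (by omega) (by omega)
              have hfin : G.dist b (τ v) ≤ d - 2 := by
                rw [heqw, SimpleGraph.dist_comm]
                exact hw2b
              omega
    obtain ⟨u, v, _, _, hdv, _⟩ := claim (Fintype.card V)
    have := aux_dist_lt_card hc u0 v
    omega
  -- propagate to all edges and all pairs
  obtain ⟨x1, y1, hadj1, hr1⟩ := hseed
  have hT : ∀ v : V, ∃ u, G.Adj u v ∧ r u v := by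
    have hstep : ∀ v z : V, (∃ u, G.Adj u v ∧ r u v) → G.Adj v z → ∃ u, G.Adj u z ∧ r u z := by
      rintro v z ⟨u, huv, hruv⟩ hvz
      by_cases hz : z = u
      · subst hz
        exact ⟨v, hvz, hre.symm hruv⟩
      · exact ⟨v, hvz, hprop u v z huv hruv hvz hz⟩
    have hwalk : ∀ (w v : V), G.Walk w v → (∃ u, G.Adj u w ∧ r u w) →
        ∃ u, G.Adj u v ∧ r u v := by
      intro w v p
      induction p with
      | nil => exact id
      | cons h q ih => exact fun hw => ih (hstep _ _ hw h)
    intro v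
    obtain ⟨p⟩ := hc y1 v
    exact hwalk y1 v p ⟨x1, hadj1, hr1⟩
  have hedge : ∀ v w : V, G.Adj v w → r v w := by
    intro v w hvw
    obtain ⟨u, huv, hruv⟩ := hT v
    by_cases hw : w = u
    · subst hw; exact hre.symm hruv
    · exact hprop u v w huv hruv hvw hw
  have hall : ∀ v w : V, r v w := by
    have hwalk : ∀ (v w : V), G.Walk v w → r v w := by
      intro v w p
      induction p with
      | nil => exact hre.refl _
      | cons h q ih => exact hre.trans (hedge _ _ h) ih
    intro v w
    obtain ⟨p⟩ := hc v w
    exact hwalk v w p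
  have huniv : {y | r x0 y} = Set.univ := Set.eq_univ_of_forall (fun y => hall x0 y)
  rw [huniv, Set.ncard_univ, Nat.card_eq_fintype_card] at hx2
  exact lt_irrefl _ hx2
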